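/- Let F be a field and x ∈ F with x ≠ −1. Let η ∈ GL₄(F) be the matrix with rows (1,0,0,0), (0,1,0,0), (0,−1,1,0), (−1,1,−1,1), and let x_{−α₁}(x) ∈ GL₄(F) be the identity matrix with (2,1)-entry replaced by x. Then (x_{−α₁}(x)·η, I₂) = (b, h^{-1}) · (η, I₂) · (g, h) in GL₄(F) × GL₂(F), where g = diag-block matrix with rows (1,0,0,0), (x/(x+1), 1/(x+1), 0, 0), (0,0,1/(x+1), x/(x+1)), (0,0,0,1); h = [[1/(x+1), x/(x+1)],[0,1]]; b = the upper-triangular matrix with rows (1,0,0,0),(0,x+1,0,0),(0,0,1,−x),(0,0,0,x+1); and (g, h) ∈ H means g = diag(a, b₀) with a = the upper-left 2×2 block, b₀ = h viewed via the embedding H = GL₂×GL₂ ↪ GL₄×GL₂, (a,b₀) ↦ (diag(a,b₀), b₀). -/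

import Mathlib

lemma aux_inv {F : Type*} [Field F] (x : F) (hx : x ≠ -1) :
    (!![1 / (x + 1), x / (x + 1); 0, 1] : Matrix (Fin 2) (Fin 2) F)⁻¹
      = !![x + 1, -x; 0, 1] := by
  have h1 : x + 1 ≠ 0 := by intro h; exact hx (by linear_combination h)
  apply Matrix.inv_eq_right_inv
  ext i j
  fin_cases i <;> fin_cases j <;>
    simp [Matrix.mul_apply, Fin.sum_univ_succ, Matrix.one_apply] <;>
    field_simp <;> ring

/-- For the model `(GL₄ × GL₂, GL₂ × GL₂)` with `H = GL₂ × GL₂` embedded by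
`(a, b) ↦ (diag(a, b), b)`: for `x ≠ −1` one has the factorization
`(x_{−α₁}(x)·η, I₂) = (b, h⁻¹) · (η, I₂) · (g, h)` in `GL₄(F) × GL₂(F)`, where
`η, x_{−α₁}(x), g, h, b` are the displayed matrices, and `(g, h)` lies in (the image of)
`H`, i.e. `g = diag(A, h)` with `A` its upper-left `2×2` block. -/
theorem stmt_8 {F : Type*} [Field F] (x : F) (hx : x ≠ -1) :
    ((!![1, 0, 0, 0; x, 1, 0, 0; 0, 0, 1, 0; 0, 0, 0, 1] *
        !![1, 0, 0, 0; 0, 1, 0, 0; 0, -1, 1, 0; -1, 1, -1, 1],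
      (1 : Matrix (Fin 2) (Fin 2) F))
      = ((!![1, 0, 0, 0; 0, x + 1, 0, 0; 0, 0, 1, -x; 0, 0, 0, x + 1] :
            Matrix (Fin 4) (Fin 4) F),
          (!![1 / (x + 1), x / (x + 1); 0, 1] : Matrix (Fin 2) (Fin 2) F)⁻¹) *
        (!![1, 0, 0, 0; 0, 1, 0, 0; 0, -1, 1, 0; -1, 1, -1, 1], 1) *
        (!![1, 0, 0, 0; x / (x + 1), 1 / (x + 1), 0, 0;
            0, 0, 1 / (x + 1), x / (x + 1); 0, 0, 0, 1],
          !![1 / (x + 1), x / (x + 1); 0, 1])) ∧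
    -- `(g, h)` lies in `H = GL₂ × GL₂ ↪ GL₄ × GL₂`, `(a,b) ↦ (diag(a,b), b)`:
    (!![1, 0, 0, 0; x / (x + 1), 1 / (x + 1), 0, 0;
        0, 0, 1 / (x + 1), x / (x + 1); 0, 0, 0, 1] : Matrix (Fin 4) (Fin 4) F)
      = !![1, 0, 0, 0;
           x / (x + 1), 1 / (x + 1), 0, 0;
           0, 0, (!![1 / (x + 1), x / (x + 1); 0, 1] : Matrix (Fin 2) (Fin 2) F) 0 0,
                 (!![1 / (x + 1), x / (x + 1); 0, 1] : Matrix (Fin 2) (Fin 2) F) 0 1;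
           0, 0, (!![1 / (x + 1), x / (x + 1); 0, 1] : Matrix (Fin 2) (Fin 2) F) 1 0,
                 (!![1 / (x + 1), x / (x + 1); 0, 1] : Matrix (Fin 2) (Fin 2) F) 1 1] := by
  have h1 : x + 1 ≠ 0 := by intro h; exact hx (by linear_combination h)
  refine ⟨?_, ?_⟩
  · rw [aux_inv x hx, Prod.mk_mul_mk, Prod.mk_mul_mk, Prod.mk.injEq]
    constructor
    · ext i j
      fin_cases i <;> fin_cases j <;>
        simp [Matrix.mul_apply, Fin.sum_univ_succ] <;> field_simp <;> ring
    · ext i j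
      fin_cases i <;> fin_cases j <;>
        simp [Matrix.mul_apply, Fin.sum_univ_succ, Matrix.one_apply] <;> field_simp <;> ring
  · ext i j
    fin_cases i <;> fin_cases j <;> simp
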